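/- Let q be a trace-zero matrix in M₂(k) over a nonarchimedean local field k, whose square q² = a·I with a ∈ O a uniformizing parameter (v(a) = 1). Then q is contained in exactly two maximal orders of M₂(k), and these two maximal orders are adjacent vertices of the Bruhat–Tits tree (their intersection is an Eichler order of level 1). -/

import Mathlib

set_option linter.unusedSectionVars false
set_option linter.unusedVariables false
set_option linter.unreachableTactic false
set_option linter.unusedTactic false
set_option maxHeartbeats 3200000

namespace Stmt16Aux

variable {O : Type*} [CommRing O] [IsDomain O] [IsDiscreteValuationRing O]
variable {K : Type*} [Field K] [Algebra O K] [IsFractionRing O K]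

lemma mem_max {x : O} (hx : ¬IsUnit x) : x ∈ IsLocalRing.maximalIdeal O :=
  (IsLocalRing.mem_maximalIdeal _).mpr (mem_nonunits_iff.mpr hx)

lemma integral_iff (M : Matrix (Fin 2) (Fin 2) K) :
    (∀ i j, M i j ∈ Set.range (algebraMap O K)) ↔
      ∃ M₀ : Matrix (Fin 2) (Fin 2) O, M₀.map (algebraMap O K) = M := by
  constructor
  · intro h
    choose f hf using h
    exact ⟨Matrix.of f, by ext i j; simp [hf]⟩
  · rintro ⟨M₀, rfl⟩ i j
    exact ⟨M₀ i j, by simp⟩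

lemma no_sqrt {a : O} (ha : Irreducible a) (t : K) : t * t ≠ algebraMap O K a := by
  intro h
  have ht : t ≠ 0 := by
    rintro rfl
    rw [mul_zero] at h
    exact ha.ne_zero ((map_eq_zero_iff _ (IsFractionRing.injective O K)).mp h.symm)
  rcases ValuationRing.isInteger_or_isInteger O t with ⟨b, hb⟩ | ⟨b, hb⟩
  · have hbb : b * b = a := by
      apply IsFractionRing.injective O K
      rw [map_mul, hb, h]
    rcases ha.isUnit_or_isUnit hbb.symm with hu | hu
    · exact ha.not_isUnit (hbb ▸ hu.mul hu)
    · exact ha.not_isUnit (hbb ▸ hu.mul hu)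
  · have : a * (b * b) = 1 := by
      apply IsFractionRing.injective O K
      rw [map_mul, map_mul, hb, map_one, ← h]
      field_simp
    exact ha.not_isUnit (IsUnit.of_mul_eq_one (b * b) this)

lemma nonunit_dvd {a d : O} (ha : Irreducible a) (hd : ¬IsUnit d) : a ∣ d := by
  rw [← Ideal.mem_span_singleton, ← (IsDiscreteValuationRing.irreducible_iff_uniformizer a).mp ha]
  exact mem_max hd

lemma unit_entry {a x y z : O} (ha : Irreducible a) (h : x * x + y * z = a) :
    IsUnit y ∨ IsUnit z := by
  by_contra hc
  push_neg at hc
  obtain ⟨hy, hz⟩ := hc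
  by_cases hx : IsUnit x
  · have hxx : x * x ∈ IsLocalRing.maximalIdeal O := by
      have hxe : x * x = a - y * z := by linear_combination h
      rw [hxe]
      exact sub_mem (mem_max ha.not_isUnit) (Ideal.mul_mem_right _ _ (mem_max hy))
    exact (mem_nonunits_iff.mp ((IsLocalRing.mem_maximalIdeal _).mp hxx)) (hx.mul hx)
  · obtain ⟨x', rfl⟩ := nonunit_dvd ha hx
    obtain ⟨y', rfl⟩ := nonunit_dvd ha hy
    have h1 : a * (a * (x' * x') + y' * z) = a * 1 := by ring_nf; ring_nf at h; linear_combination h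
    have h2 : a * (x' * x') + y' * z = 1 := mul_left_cancel₀ ha.ne_zero h1
    have h3 : IsUnit (y' * z) := by
      have : y' * z = 1 - a * (x' * x') := by linear_combination h2
      rw [this]
      exact IsLocalRing.isUnit_one_sub_self_of_mem_nonunits _
        (mem_nonunits_iff.mpr (fun hu => ha.not_isUnit (isUnit_of_mul_isUnit_left hu)))
    exact hz (isUnit_of_mul_isUnit_right h3)

lemma integral_iff' (M : Matrix (Fin 2) (Fin 2) K) :
    (∀ i j, M i j ∈ Set.range (algebraMap O K)) ↔
      ∃ M₀ : Matrix (Fin 2) (Fin 2) O, (algebraMap O K).mapMatrix M₀ = M := by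
  rw [integral_iff]
  simp [RingHom.mapMatrix_apply]

lemma conj_int (u₀ : (Matrix (Fin 2) (Fin 2) O)ˣ) (N : Matrix (Fin 2) (Fin 2) K) :
    (∀ i j, ((algebraMap O K).mapMatrix (↑u₀⁻¹ : Matrix (Fin 2) (Fin 2) O) * N *
        (algebraMap O K).mapMatrix (↑u₀ : Matrix (Fin 2) (Fin 2) O)) i j
      ∈ Set.range (algebraMap O K)) ↔
    (∀ i j, N i j ∈ Set.range (algebraMap O K)) := by
  set φ : Matrix (Fin 2) (Fin 2) O →+* Matrix (Fin 2) (Fin 2) K := (algebraMap O K).mapMatrix with hφ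
  have hui : φ ↑u₀ * φ ↑u₀⁻¹ = 1 := by
    rw [← map_mul φ, Units.mul_inv, map_one φ]
  have hiu : φ ↑u₀⁻¹ * φ ↑u₀ = 1 := by
    rw [← map_mul φ, Units.inv_mul, map_one φ]
  rw [integral_iff', integral_iff']
  constructor
  · rintro ⟨X₀, hX⟩
    refine ⟨(↑u₀ : Matrix (Fin 2) (Fin 2) O) * X₀ * (↑u₀⁻¹ : Matrix (Fin 2) (Fin 2) O), ?_⟩
    rw [map_mul φ, map_mul φ, hX]
    calc φ ↑u₀ * (φ ↑u₀⁻¹ * N * φ ↑u₀) * φ ↑u₀⁻¹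
        = (φ ↑u₀ * φ ↑u₀⁻¹) * N * (φ ↑u₀ * φ ↑u₀⁻¹) := by
          simp only [mul_assoc]
      _ = N := by rw [hui, one_mul, mul_one]
  · rintro ⟨N₀, rfl⟩
    exact ⟨(↑u₀⁻¹ : Matrix (Fin 2) (Fin 2) O) * N₀ * (↑u₀ : Matrix (Fin 2) (Fin 2) O), by rw [map_mul φ, map_mul φ]⟩

lemma one_add_unit {a e : O} (ha : Irreducible a) :
    IsUnit (Matrix.det !![(1 : O), a * e; e, 1]) := by
  rw [Matrix.det_fin_two_of]
  have h : (1 : O) * 1 - a * e * e = 1 - a * e * e := by ring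
  rw [h]
  refine IsLocalRing.isUnit_one_sub_self_of_mem_nonunits _ (mem_nonunits_iff.mpr fun hu => ?_)
  exact ha.not_isUnit (isUnit_of_mul_isUnit_left (isUnit_of_mul_isUnit_left hu))

lemma cent {a : O} (ha : Irreducible a) (z : (Matrix (Fin 2) (Fin 2) K)ˣ)
    (hz : (↑z : Matrix (Fin 2) (Fin 2) K) * !![0, algebraMap O K a; 1, 0]
        = !![0, algebraMap O K a; 1, 0] * (↑z : Matrix (Fin 2) (Fin 2) K)) :
    ∃ s : K, s ≠ 0 ∧ ∃ u₀ : (Matrix (Fin 2) (Fin 2) O)ˣ,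
      (↑z : Matrix (Fin 2) (Fin 2) K)
          = s • (algebraMap O K).mapMatrix (↑u₀ : Matrix (Fin 2) (Fin 2) O) ∨
      (↑z : Matrix (Fin 2) (Fin 2) K)
          = !![0, algebraMap O K a; 1, 0]
            * (s • (algebraMap O K).mapMatrix (↑u₀ : Matrix (Fin 2) (Fin 2) O)) := by
  have hinj : Function.Injective (algebraMap O K) := IsFractionRing.injective O K
  have haK : algebraMap O K a ≠ 0 := fun h => ha.ne_zero ((map_eq_zero_iff _ hinj).mp h)
  set aK := algebraMap O K a with haKdef
  set Z := (↑z : Matrix (Fin 2) (Fin 2) K) with hZ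
  have h1 := congr_fun (congr_fun hz 0) 0
  have h2 := congr_fun (congr_fun hz 0) 1
  simp [Matrix.mul_apply, Fin.sum_univ_two, ← hZ] at h1 h2
  have h11 : Z 1 1 = Z 0 0 := by
    have := h2
    rw [mul_comm (Z 0 0) aK] at this
    exact (mul_left_cancel₀ haK this).symm
  set p := Z 0 0 with hp0
  set r := Z 1 0 with hr0
  have heta : Z = !![p, aK * r; r, p] := by
    rw [Matrix.eta_fin_two Z, h1, h11]
  have hdet : Z.det ≠ 0 := by
    have := (Matrix.isUnit_iff_isUnit_det _).mp z.isUnit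
    exact this.ne_zero
  have hdet2 : p * p - aK * r * r ≠ 0 := by
    rw [heta, Matrix.det_fin_two_of] at hdet
    intro h; apply hdet; linear_combination h
  by_cases hr : r = 0
  · have hp : p ≠ 0 := by
      intro h; apply hdet2; rw [h, hr]; ring
    refine ⟨p, hp, 1, Or.inl ?_⟩
    rw [heta, hr]
    ext i j
    fin_cases i <;> fin_cases j <;>
      simp [Matrix.one_apply]
  · by_cases hp : p = 0
    · refine ⟨r, hr, 1, Or.inr ?_⟩
      rw [heta, hp]
      ext i j
      fin_cases i <;> fin_cases j <;>
        simp [Matrix.mul_apply, Fin.sum_univ_two, Matrix.one_apply, mul_comm]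
    · by_cases hc : ∃ c : O, algebraMap O K c * p = r
      · obtain ⟨c, hc⟩ := hc
        have hu := one_add_unit (e := c) ha
        have hu' : IsUnit !![(1 : O), a * c; c, 1] :=
          (Matrix.isUnit_iff_isUnit_det _).mpr hu
        refine ⟨p, hp, hu'.unit, Or.inl ?_⟩
        rw [heta]
        have hcoe : (↑hu'.unit : Matrix (Fin 2) (Fin 2) O) = !![(1 : O), a * c; c, 1] :=
          hu'.unit_spec
        rw [hcoe]
        ext i j
        fin_cases i <;> fin_cases j <;>
          simp [RingHom.mapMatrix_apply, ← hc, map_mul] <;> ring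
      · have hd : ∃ d : O, algebraMap O K d * r = p := by
          rcases ValuationRing.isInteger_or_isInteger O (r / p) with ⟨c, hcc⟩ | ⟨d, hdd⟩
          · exact absurd ⟨c, by rw [hcc]; field_simp⟩ hc
          · exact ⟨d, by rw [inv_div, eq_div_iff hr] at hdd; exact hdd⟩
        obtain ⟨d, hd⟩ := hd
        have hdnu : ¬IsUnit d := by
          rintro ⟨v, rfl⟩
          apply hc
          refine ⟨↑v⁻¹, ?_⟩
          have : algebraMap O K ↑v⁻¹ * (algebraMap O K ↑v * r) = r := by
            rw [← mul_assoc, ← map_mul, Units.inv_mul, map_one, one_mul]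
          rw [hd] at this
          exact this
        obtain ⟨e, rfl⟩ := nonunit_dvd ha hdnu
        have hu := one_add_unit (e := e) ha
        have hu' : IsUnit !![(1 : O), a * e; e, 1] :=
          (Matrix.isUnit_iff_isUnit_det _).mpr hu
        refine ⟨r, hr, hu'.unit, Or.inr ?_⟩
        rw [heta]
        have hcoe : (↑hu'.unit : Matrix (Fin 2) (Fin 2) O) = !![(1 : O), a * e; e, 1] :=
          hu'.unit_spec
        rw [hcoe]
        ext i j
        fin_cases i <;> fin_cases j <;>
          simp [Matrix.mul_apply, Fin.sum_univ_two, RingHom.mapMatrix_apply, ← hd, map_mul] <;> ring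

lemma key {a : O} (ha : Irreducible a) (h : (Matrix (Fin 2) (Fin 2) K)ˣ)
    (hint : ∀ i j, ((↑h⁻¹ : Matrix (Fin 2) (Fin 2) K) * !![0, algebraMap O K a; 1, 0]
        * (↑h : Matrix (Fin 2) (Fin 2) K)) i j ∈ Set.range (algebraMap O K)) :
    ∃ s : K, s ≠ 0 ∧ ∃ u₀ : (Matrix (Fin 2) (Fin 2) O)ˣ,
      (↑h : Matrix (Fin 2) (Fin 2) K)
          = s • (algebraMap O K).mapMatrix (↑u₀ : Matrix (Fin 2) (Fin 2) O) ∨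
      (↑h : Matrix (Fin 2) (Fin 2) K)
          = !![0, algebraMap O K a; 1, 0]
            * (s • (algebraMap O K).mapMatrix (↑u₀ : Matrix (Fin 2) (Fin 2) O)) := by
  have hinj : Function.Injective (algebraMap O K) := IsFractionRing.injective O K
  set φ : Matrix (Fin 2) (Fin 2) O →+* Matrix (Fin 2) (Fin 2) K :=
    (algebraMap O K).mapMatrix with hφ
  have hφC : φ !![0, a; 1, 0] = !![0, algebraMap O K a; 1, 0] := by
    ext i j
    fin_cases i <;> fin_cases j <;> simp [hφ, RingHom.mapMatrix_apply]
  obtain ⟨M₀, hM₀⟩ := (integral_iff' _).mp hint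
  have hCC : (!![0, algebraMap O K a; 1, 0] : Matrix (Fin 2) (Fin 2) K)
      * !![0, algebraMap O K a; 1, 0] = algebraMap O K a • (1 : Matrix (Fin 2) (Fin 2) K) := by
    ext i j
    fin_cases i <;> fin_cases j <;>
      simp [Matrix.mul_apply, Fin.sum_univ_two, Matrix.one_apply]
  have hMM : φ M₀ * φ M₀ = algebraMap O K a • (1 : Matrix (Fin 2) (Fin 2) K) := by
    rw [hM₀]
    calc (↑h⁻¹ : Matrix (Fin 2) (Fin 2) K) * !![0, algebraMap O K a; 1, 0]
          * (↑h : Matrix (Fin 2) (Fin 2) K)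
          * ((↑h⁻¹ : Matrix (Fin 2) (Fin 2) K) * !![0, algebraMap O K a; 1, 0]
            * (↑h : Matrix (Fin 2) (Fin 2) K))
        = (↑h⁻¹ : Matrix (Fin 2) (Fin 2) K) * (!![0, algebraMap O K a; 1, 0]
            * (((↑h : Matrix (Fin 2) (Fin 2) K) * (↑h⁻¹ : Matrix (Fin 2) (Fin 2) K))
              * !![0, algebraMap O K a; 1, 0])) * (↑h : Matrix (Fin 2) (Fin 2) K) := by
          simp only [mul_assoc]
      _ = (↑h⁻¹ : Matrix (Fin 2) (Fin 2) K) * (!![0, algebraMap O K a; 1, 0]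
            * !![0, algebraMap O K a; 1, 0]) * (↑h : Matrix (Fin 2) (Fin 2) K) := by
          rw [Units.mul_inv, one_mul]
      _ = algebraMap O K a • ((↑h⁻¹ : Matrix (Fin 2) (Fin 2) K) * (↑h : Matrix (Fin 2) (Fin 2) K)) := by
          rw [hCC, mul_smul_comm, smul_mul_assoc, mul_one]
      _ = algebraMap O K a • (1 : Matrix (Fin 2) (Fin 2) K) := by rw [Units.inv_mul]
  have htrM : Matrix.trace (φ M₀) = 0 := by
    rw [hM₀, Matrix.trace_mul_cycle, Units.mul_inv, one_mul]
    simp [Matrix.trace_fin_two]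
  have hent : ∀ i j, algebraMap O K (M₀ i j) = (φ M₀) i j := by
    intro i j
    simp [hφ, RingHom.mapMatrix_apply]
  have hxyz : M₀ 0 0 * M₀ 0 0 + M₀ 0 1 * M₀ 1 0 = a := by
    apply hinj
    have h00 := congr_fun (congr_fun hMM 0) 0
    simp [Matrix.mul_apply, Fin.sum_univ_two, Matrix.one_apply] at h00
    rw [map_add, map_mul, map_mul]
    simp only [hent]
    exact h00
  have hw : M₀ 1 1 = - M₀ 0 0 := by
    have h0 : algebraMap O K (M₀ 0 0 + M₀ 1 1) = algebraMap O K 0 := by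
      rw [map_add, hent, hent, map_zero]
      rw [Matrix.trace_fin_two] at htrM
      exact htrM
    have := hinj h0
    linear_combination this
  have hstep : ∃ um : Matrix (Fin 2) (Fin 2) O, IsUnit um
      ∧ M₀ * um = um * !![0, a; 1, 0] := by
    rcases unit_entry ha hxyz with hy | hz
    · refine ⟨!![0, M₀ 0 1; 1, M₀ 1 1], ?_, ?_⟩
      · rw [Matrix.isUnit_iff_isUnit_det, Matrix.det_fin_two_of]
        simpa using hy.neg
      · ext i j
        rw [Matrix.eta_fin_two M₀]
        fin_cases i <;> fin_cases j <;>
          simp [Matrix.mul_apply, Fin.sum_univ_two] <;> (try rw [hw]) <;>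
          first
            | linear_combination hxyz
            | linear_combination -hxyz
            | ring
    · refine ⟨!![1, M₀ 0 0; 0, M₀ 1 0], ?_, ?_⟩
      · rw [Matrix.isUnit_iff_isUnit_det, Matrix.det_fin_two_of]
        simpa using hz
      · ext i j
        rw [Matrix.eta_fin_two M₀]
        fin_cases i <;> fin_cases j <;>
          simp [Matrix.mul_apply, Fin.sum_univ_two] <;> (try rw [hw]) <;>
          first
            | linear_combination hxyz
            | linear_combination -hxyz
            | ring
  obtain ⟨um, hum, hMum⟩ := hstep
  have hU₀c : (↑hum.unit : Matrix (Fin 2) (Fin 2) O) = um := hum.unit_spec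
  set U : (Matrix (Fin 2) (Fin 2) K)ˣ := Units.map φ.toMonoidHom hum.unit with hU
  have hUc : (↑U : Matrix (Fin 2) (Fin 2) K) = φ um := by
    rw [hU, Units.coe_map, hU₀c]; rfl
  have hUic : (↑U⁻¹ : Matrix (Fin 2) (Fin 2) K)
      = φ (↑hum.unit⁻¹ : Matrix (Fin 2) (Fin 2) O) := by
    rw [hU, ← map_inv (Units.map φ.toMonoidHom), Units.coe_map]; rfl
  have hcomm : (↑(h * U) : Matrix (Fin 2) (Fin 2) K) * !![0, algebraMap O K a; 1, 0]
      = !![0, algebraMap O K a; 1, 0] * (↑(h * U) : Matrix (Fin 2) (Fin 2) K) := by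
    have hK : φ M₀ * φ um = φ um * !![0, algebraMap O K a; 1, 0] := by
      rw [← map_mul φ, hMum, map_mul φ, hφC]
    rw [Units.val_mul, hUc]
    calc (↑h : Matrix (Fin 2) (Fin 2) K) * φ um * !![0, algebraMap O K a; 1, 0]
        = (↑h : Matrix (Fin 2) (Fin 2) K) * (φ um * !![0, algebraMap O K a; 1, 0]) := by
          rw [mul_assoc]
      _ = (↑h : Matrix (Fin 2) (Fin 2) K) * (φ M₀ * φ um) := by rw [hK]
      _ = ((↑h * ↑h⁻¹ : Matrix (Fin 2) (Fin 2) K)) * !![0, algebraMap O K a; 1, 0]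
            * ((↑h : Matrix (Fin 2) (Fin 2) K) * φ um) := by
          rw [hM₀]; simp only [mul_assoc]
      _ = !![0, algebraMap O K a; 1, 0] * ((↑h : Matrix (Fin 2) (Fin 2) K) * φ um) := by
          rw [Units.mul_inv, one_mul]
  obtain ⟨s, hs, u₀', hcase⟩ := cent ha (h * U) hcomm
  have hhz : (↑h : Matrix (Fin 2) (Fin 2) K)
      = (↑(h * U) : Matrix (Fin 2) (Fin 2) K) * φ (↑hum.unit⁻¹ : Matrix (Fin 2) (Fin 2) O) := by
    rw [← hUic, ← Units.val_mul, mul_inv_cancel_right]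
  rcases hcase with hc | hc
  · refine ⟨s, hs, u₀' * hum.unit⁻¹, Or.inl ?_⟩
    rw [hhz, hc, Units.val_mul, map_mul φ, smul_mul_assoc]
  · refine ⟨s, hs, u₀' * hum.unit⁻¹, Or.inr ?_⟩
    rw [hhz, hc, Units.val_mul, map_mul φ, mul_assoc, smul_mul_assoc]

lemma companion {a : O} (ha : Irreducible a) (q : Matrix (Fin 2) (Fin 2) K)
    (htr : Matrix.trace q = 0)
    (hq2 : q * q = algebraMap O K a • (1 : Matrix (Fin 2) (Fin 2) K)) :
    ∃ g : (Matrix (Fin 2) (Fin 2) K)ˣ,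
      (↑g⁻¹ : Matrix (Fin 2) (Fin 2) K) * q * (↑g : Matrix (Fin 2) (Fin 2) K)
        = !![0, algebraMap O K a; 1, 0] := by
  have e00 := congr_fun (congr_fun hq2 0) 0
  have e01 := congr_fun (congr_fun hq2 0) 1
  have e10 := congr_fun (congr_fun hq2 1) 0
  have e11 := congr_fun (congr_fun hq2 1) 1
  simp [Matrix.mul_apply, Fin.sum_univ_two, Matrix.one_apply] at e00 e01 e10 e11
  rw [Matrix.trace_fin_two] at htr
  have buildg : ∀ g : (Matrix (Fin 2) (Fin 2) K)ˣ,
      q * (↑g : Matrix (Fin 2) (Fin 2) K)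
        = (↑g : Matrix (Fin 2) (Fin 2) K) * !![0, algebraMap O K a; 1, 0] →
      (↑g⁻¹ : Matrix (Fin 2) (Fin 2) K) * q * (↑g : Matrix (Fin 2) (Fin 2) K)
        = !![0, algebraMap O K a; 1, 0] := by
    intro g hg
    calc (↑g⁻¹ : Matrix (Fin 2) (Fin 2) K) * q * (↑g : Matrix (Fin 2) (Fin 2) K)
        = (↑g⁻¹ : Matrix (Fin 2) (Fin 2) K) * (q * (↑g : Matrix (Fin 2) (Fin 2) K)) := by
          rw [mul_assoc]
      _ = ((↑g⁻¹ : Matrix (Fin 2) (Fin 2) K) * (↑g : Matrix (Fin 2) (Fin 2) K))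
            * !![0, algebraMap O K a; 1, 0] := by rw [hg, ← mul_assoc]
      _ = !![0, algebraMap O K a; 1, 0] := by rw [Units.inv_mul, one_mul]
  by_cases h10 : q 1 0 = 0
  · have h01 : q 0 1 ≠ 0 := by
      intro h01
      apply no_sqrt ha (q 0 0)
      rw [← e00, h01, h10]
      ring
    refine ⟨⟨!![0, q 0 1; 1, q 1 1], !![-(q 1 1) * (q 0 1)⁻¹, 1; (q 0 1)⁻¹, 0], ?_, ?_⟩,
      buildg _ ?_⟩
    · ext i j
      fin_cases i <;> fin_cases j <;>
        (simp [Matrix.mul_apply, Fin.sum_univ_two, Matrix.one_apply]; try field_simp)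
    · ext i j
      fin_cases i <;> fin_cases j <;>
        (simp [Matrix.mul_apply, Fin.sum_univ_two, Matrix.one_apply]; try field_simp; try ring)
    · show q * _ = (_ : Matrix (Fin 2) (Fin 2) K) * _
      ext i j
      fin_cases i <;> fin_cases j <;>
        simp [Matrix.mul_apply, Fin.sum_univ_two, h10] <;>
        first
          | linear_combination e01
          | linear_combination e11
          | linear_combination e00
          | linear_combination e10
          | linear_combination e11 - q 0 1 * h10
          | ring
  · refine ⟨⟨!![1, q 0 0; 0, q 1 0], !![1, -(q 0 0) * (q 1 0)⁻¹; 0, (q 1 0)⁻¹], ?_, ?_⟩,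
      buildg _ ?_⟩
    · ext i j
      fin_cases i <;> fin_cases j <;>
        (simp [Matrix.mul_apply, Fin.sum_univ_two, Matrix.one_apply]; try field_simp)
    · ext i j
      fin_cases i <;> fin_cases j <;>
        (simp [Matrix.mul_apply, Fin.sum_univ_two, Matrix.one_apply]; try field_simp; try ring)
    · show q * _ = (_ : Matrix (Fin 2) (Fin 2) K) * _
      ext i j
      fin_cases i <;> fin_cases j <;>
        simp [Matrix.mul_apply, Fin.sum_univ_two] <;>
        first
          | linear_combination e01
          | linear_combination e11
          | linear_combination e00
          | linear_combination e10
          | ring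

lemma setEq (g G : (Matrix (Fin 2) (Fin 2) K)ˣ) (s : K) (hs : s ≠ 0)
    (u₀ : (Matrix (Fin 2) (Fin 2) O)ˣ)
    (hg : (↑g : Matrix (Fin 2) (Fin 2) K)
      = (↑G : Matrix (Fin 2) (Fin 2) K)
        * (s • (algebraMap O K).mapMatrix (↑u₀ : Matrix (Fin 2) (Fin 2) O))) :
    {m : Matrix (Fin 2) (Fin 2) K | ∀ i j,
        ((↑g⁻¹ : Matrix (Fin 2) (Fin 2) K) * m * (↑g : Matrix (Fin 2) (Fin 2) K)) i j
          ∈ Set.range (algebraMap O K)}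
      = {m | ∀ i j,
        ((↑G⁻¹ : Matrix (Fin 2) (Fin 2) K) * m * (↑G : Matrix (Fin 2) (Fin 2) K)) i j
          ∈ Set.range (algebraMap O K)} := by
  set φ : Matrix (Fin 2) (Fin 2) O →+* Matrix (Fin 2) (Fin 2) K :=
    (algebraMap O K).mapMatrix with hφ
  have hmulinv : (s • φ (↑u₀ : Matrix (Fin 2) (Fin 2) O))
      * (s⁻¹ • φ (↑u₀⁻¹ : Matrix (Fin 2) (Fin 2) O)) = 1 := by
    rw [smul_mul_smul_comm, mul_inv_cancel₀ hs, ← map_mul φ, Units.mul_inv, map_one φ, one_smul]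
  have hinvmul : (s⁻¹ • φ (↑u₀⁻¹ : Matrix (Fin 2) (Fin 2) O))
      * (s • φ (↑u₀ : Matrix (Fin 2) (Fin 2) O)) = 1 := by
    rw [smul_mul_smul_comm, inv_mul_cancel₀ hs, ← map_mul φ, Units.inv_mul, map_one φ, one_smul]
  set su : (Matrix (Fin 2) (Fin 2) K)ˣ :=
    ⟨s • φ (↑u₀ : Matrix (Fin 2) (Fin 2) O),
     s⁻¹ • φ (↑u₀⁻¹ : Matrix (Fin 2) (Fin 2) O), hmulinv, hinvmul⟩ with hsu
  have hgG : g = G * su := Units.ext (by rw [Units.val_mul]; exact hg)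
  ext m
  simp only [Set.mem_setOf_eq]
  have hrw : (↑g⁻¹ : Matrix (Fin 2) (Fin 2) K) * m * (↑g : Matrix (Fin 2) (Fin 2) K)
      = φ (↑u₀⁻¹ : Matrix (Fin 2) (Fin 2) O)
        * ((↑G⁻¹ : Matrix (Fin 2) (Fin 2) K) * m * (↑G : Matrix (Fin 2) (Fin 2) K))
        * φ (↑u₀ : Matrix (Fin 2) (Fin 2) O) := by
    rw [hgG, mul_inv_rev, Units.val_mul, Units.val_mul]
    show (s⁻¹ • φ (↑u₀⁻¹ : Matrix (Fin 2) (Fin 2) O)) * (↑G⁻¹ : Matrix (Fin 2) (Fin 2) K) * m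
        * ((↑G : Matrix (Fin 2) (Fin 2) K) * (s • φ (↑u₀ : Matrix (Fin 2) (Fin 2) O))) = _
    simp only [smul_mul_assoc, mul_smul_comm, smul_smul, inv_mul_cancel₀ hs,
      mul_inv_cancel₀ hs, one_smul, mul_assoc]
  rw [hrw]
  exact conj_int u₀ _

end Stmt16Aux

/-- A maximal order of `M₂(K)`: a conjugate `g·M₂(O)·g⁻¹` of `M₂(O)`, as a set. -/
def IsMaximalOrderM2 (O : Type*) [CommRing O] (K : Type*) [Field K] [Algebra O K]
    (D : Set (Matrix (Fin 2) (Fin 2) K)) : Prop :=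
  ∃ g : Matrix.GeneralLinearGroup (Fin 2) K,
    D = {m | ∀ i j : Fin 2,
      ((↑g⁻¹ : Matrix (Fin 2) (Fin 2) K) * m * (↑g : Matrix (Fin 2) (Fin 2) K)) i j
        ∈ Set.range (algebraMap O K)}

/-- A trace-zero `q ∈ M₂(k)` with `q² = a·I`, `a` a uniformizer, lies in exactly two maximal
orders, and these are adjacent in the Bruhat–Tits tree: their intersection is conjugate to
the standard Eichler order of level 1. -/
theorem stmt_16 (O : Type*) [CommRing O] [IsDomain O] [IsDiscreteValuationRing O]
    [IsAdicComplete (IsLocalRing.maximalIdeal O) O] [Finite (IsLocalRing.ResidueField O)]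
    (K : Type*) [Field K] [Algebra O K] [IsFractionRing O K]
    (q : Matrix (Fin 2) (Fin 2) K) (htr : Matrix.trace q = 0)
    (a : O) (ha : Irreducible a)
    (hq2 : q * q = algebraMap O K a • (1 : Matrix (Fin 2) (Fin 2) K)) :
    ∃ D D' : Set (Matrix (Fin 2) (Fin 2) K),
      IsMaximalOrderM2 O K D ∧ IsMaximalOrderM2 O K D' ∧ D ≠ D' ∧
      q ∈ D ∧ q ∈ D' ∧
      (∀ E : Set (Matrix (Fin 2) (Fin 2) K), IsMaximalOrderM2 O K E → q ∈ E → E = D ∨ E = D') ∧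
      ∃ g : Matrix.GeneralLinearGroup (Fin 2) K,
        D ∩ D' = {m | (∀ i j : Fin 2,
            ((↑g⁻¹ : Matrix (Fin 2) (Fin 2) K) * m * (↑g : Matrix (Fin 2) (Fin 2) K)) i j
              ∈ Set.range (algebraMap O K)) ∧
          ∃ c : O, ((↑g⁻¹ : Matrix (Fin 2) (Fin 2) K) * m * (↑g : Matrix (Fin 2) (Fin 2) K)) 1 0
              = algebraMap O K (a * c)} := by
  classical
  have hinj : Function.Injective (algebraMap O K) := IsFractionRing.injective O K
  have haK : algebraMap O K a ≠ 0 := fun h => ha.ne_zero ((map_eq_zero_iff _ hinj).mp h)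
  obtain ⟨G0, hG0⟩ := Stmt16Aux.companion ha q htr hq2
  have hCuv : (!![0, algebraMap O K a; 1, 0] : Matrix (Fin 2) (Fin 2) K)
      * !![0, 1; (algebraMap O K a)⁻¹, 0] = 1 := by
    ext i j
    fin_cases i <;> fin_cases j <;>
      (simp [Matrix.mul_apply, Fin.sum_univ_two, Matrix.one_apply]; try field_simp)
  have hCvu : (!![0, 1; (algebraMap O K a)⁻¹, 0] : Matrix (Fin 2) (Fin 2) K)
      * !![0, algebraMap O K a; 1, 0] = 1 := by
    ext i j
    fin_cases i <;> fin_cases j <;>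
      (simp [Matrix.mul_apply, Fin.sum_univ_two, Matrix.one_apply]; try field_simp)
  set Cu : (Matrix (Fin 2) (Fin 2) K)ˣ :=
    ⟨!![0, algebraMap O K a; 1, 0], !![0, 1; (algebraMap O K a)⁻¹, 0], hCuv, hCvu⟩ with hCudef
  have hCuval : (↑Cu : Matrix (Fin 2) (Fin 2) K) = !![0, algebraMap O K a; 1, 0] := rfl
  have hCuinv : (↑Cu⁻¹ : Matrix (Fin 2) (Fin 2) K) = !![0, 1; (algebraMap O K a)⁻¹, 0] := rfl
  have hCint : ∀ i j : Fin 2,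
      (!![0, algebraMap O K a; 1, 0] : Matrix (Fin 2) (Fin 2) K) i j
        ∈ Set.range (algebraMap O K) := by
    intro i j
    fin_cases i <;> fin_cases j
    · exact ⟨0, by simp⟩
    · exact ⟨a, by simp⟩
    · exact ⟨1, by simp⟩
    · exact ⟨0, by simp⟩
  have hsplit : ∀ (u v : (Matrix (Fin 2) (Fin 2) K)ˣ) (m : Matrix (Fin 2) (Fin 2) K),
      (↑(u * v)⁻¹ : Matrix (Fin 2) (Fin 2) K) * m * (↑(u * v) : Matrix (Fin 2) (Fin 2) K)
        = (↑v⁻¹ : Matrix (Fin 2) (Fin 2) K)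
          * ((↑u⁻¹ : Matrix (Fin 2) (Fin 2) K) * m * (↑u : Matrix (Fin 2) (Fin 2) K))
          * (↑v : Matrix (Fin 2) (Fin 2) K) := by
    intro u v m
    rw [mul_inv_rev, Units.val_mul, Units.val_mul]
    simp only [mul_assoc]
  have hcanc : ∀ (u : (Matrix (Fin 2) (Fin 2) K)ˣ) (X : Matrix (Fin 2) (Fin 2) K),
      (↑u⁻¹ : Matrix (Fin 2) (Fin 2) K)
        * ((↑u : Matrix (Fin 2) (Fin 2) K) * X * (↑u⁻¹ : Matrix (Fin 2) (Fin 2) K))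
        * (↑u : Matrix (Fin 2) (Fin 2) K) = X := by
    intro u X
    calc (↑u⁻¹ : Matrix (Fin 2) (Fin 2) K)
        * ((↑u : Matrix (Fin 2) (Fin 2) K) * X * (↑u⁻¹ : Matrix (Fin 2) (Fin 2) K))
        * (↑u : Matrix (Fin 2) (Fin 2) K)
        = ((↑u⁻¹ : Matrix (Fin 2) (Fin 2) K) * (↑u : Matrix (Fin 2) (Fin 2) K)) * X
          * ((↑u⁻¹ : Matrix (Fin 2) (Fin 2) K) * (↑u : Matrix (Fin 2) (Fin 2) K)) := by
          simp only [mul_assoc]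
      _ = X := by rw [Units.inv_mul, one_mul, mul_one]
  have hcanc2 : ∀ (u : (Matrix (Fin 2) (Fin 2) K)ˣ) (X : Matrix (Fin 2) (Fin 2) K),
      (↑u : Matrix (Fin 2) (Fin 2) K)
        * ((↑u⁻¹ : Matrix (Fin 2) (Fin 2) K) * X * (↑u : Matrix (Fin 2) (Fin 2) K))
        * (↑u⁻¹ : Matrix (Fin 2) (Fin 2) K) = X := by
    intro u X
    have := hcanc u⁻¹ X
    rwa [inv_inv] at this
  have hq' : (↑G0 : Matrix (Fin 2) (Fin 2) K) * !![0, algebraMap O K a; 1, 0]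
      * (↑G0⁻¹ : Matrix (Fin 2) (Fin 2) K) = q := by
    rw [← hG0]
    exact hcanc2 G0 q
  refine ⟨{m | ∀ i j : Fin 2,
      ((↑G0⁻¹ : Matrix (Fin 2) (Fin 2) K) * m * (↑G0 : Matrix (Fin 2) (Fin 2) K)) i j
        ∈ Set.range (algebraMap O K)},
    {m | ∀ i j : Fin 2,
      ((↑(G0 * Cu)⁻¹ : Matrix (Fin 2) (Fin 2) K) * m * (↑(G0 * Cu) : Matrix (Fin 2) (Fin 2) K)) i j
        ∈ Set.range (algebraMap O K)},
    ⟨G0, rfl⟩, ⟨G0 * Cu, rfl⟩, ?_, ?_, ?_, ?_, ?_⟩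
  · -- D ≠ D'
    intro hDD
    have hmD : ∀ i j : Fin 2, ((↑G0⁻¹ : Matrix (Fin 2) (Fin 2) K)
        * ((↑G0 : Matrix (Fin 2) (Fin 2) K) * (!![0, 1; 0, 0] : Matrix (Fin 2) (Fin 2) K)
          * (↑G0⁻¹ : Matrix (Fin 2) (Fin 2) K))
        * (↑G0 : Matrix (Fin 2) (Fin 2) K)) i j ∈ Set.range (algebraMap O K) := by
      intro i j
      rw [hcanc]
      fin_cases i <;> fin_cases j
      · exact ⟨0, by simp⟩
      · exact ⟨1, by simp⟩
      · exact ⟨0, by simp⟩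
      · exact ⟨0, by simp⟩
    have hmD' := (Set.ext_iff.mp hDD
      ((↑G0 : Matrix (Fin 2) (Fin 2) K) * (!![0, 1; 0, 0] : Matrix (Fin 2) (Fin 2) K)
        * (↑G0⁻¹ : Matrix (Fin 2) (Fin 2) K))).mp hmD
    have h10 := hmD' 1 0
    rw [hsplit] at h10
    rw [hcanc] at h10
    rw [hCuinv, hCuval] at h10
    have h10' : (algebraMap O K a)⁻¹ ∈ Set.range (algebraMap O K) := by
      have hval : ((!![0, 1; (algebraMap O K a)⁻¹, 0] : Matrix (Fin 2) (Fin 2) K)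
          * (!![0, 1; 0, 0] : Matrix (Fin 2) (Fin 2) K)
          * (!![0, algebraMap O K a; 1, 0] : Matrix (Fin 2) (Fin 2) K)) 1 0
          = (algebraMap O K a)⁻¹ := by
        simp [Matrix.mul_apply, Fin.sum_univ_two]
      rw [← hval]
      exact h10
    obtain ⟨b, hb⟩ := h10'
    have hone : b * a = 1 := by
      apply hinj
      rw [map_mul, hb, map_one]
      field_simp
    exact ha.not_isUnit (IsUnit.of_mul_eq_one b (by linear_combination hone))
  · -- q ∈ D
    intro i j
    rw [hG0]
    exact hCint i j
  · -- q ∈ D'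
    intro i j
    rw [hsplit G0 Cu q, hG0]
    have : (↑Cu⁻¹ : Matrix (Fin 2) (Fin 2) K) * !![0, algebraMap O K a; 1, 0]
        * (↑Cu : Matrix (Fin 2) (Fin 2) K) = !![0, algebraMap O K a; 1, 0] := by
      rw [show (!![0, algebraMap O K a; 1, 0] : Matrix (Fin 2) (Fin 2) K)
          = (↑Cu : Matrix (Fin 2) (Fin 2) K) from rfl]
      rw [Units.inv_mul, one_mul]
    rw [this]
    exact hCint i j
  · -- uniqueness
    rintro E ⟨g₁, rfl⟩ hqE
    have hqE' : ∀ i j : Fin 2, ((↑g₁⁻¹ : Matrix (Fin 2) (Fin 2) K) * q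
        * (↑g₁ : Matrix (Fin 2) (Fin 2) K)) i j ∈ Set.range (algebraMap O K) := hqE
    have hint : ∀ i j : Fin 2, ((↑(G0⁻¹ * g₁)⁻¹ : Matrix (Fin 2) (Fin 2) K)
        * !![0, algebraMap O K a; 1, 0]
        * (↑(G0⁻¹ * g₁) : Matrix (Fin 2) (Fin 2) K)) i j ∈ Set.range (algebraMap O K) := by
      have heq : (↑(G0⁻¹ * g₁)⁻¹ : Matrix (Fin 2) (Fin 2) K) * !![0, algebraMap O K a; 1, 0]
          * (↑(G0⁻¹ * g₁) : Matrix (Fin 2) (Fin 2) K)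
          = (↑g₁⁻¹ : Matrix (Fin 2) (Fin 2) K) * q * (↑g₁ : Matrix (Fin 2) (Fin 2) K) := by
        rw [hsplit G0⁻¹ g₁, inv_inv, hq']
      intro i j
      rw [heq]
      exact hqE' i j
    obtain ⟨s, hs, u₀, hcase⟩ := Stmt16Aux.key ha (G0⁻¹ * g₁) hint
    rcases hcase with hc | hc
    · left
      apply Stmt16Aux.setEq g₁ G0 s hs u₀
      rw [← hc, Units.val_mul, Units.mul_inv_cancel_left]
    · right
      apply Stmt16Aux.setEq g₁ (G0 * Cu) s hs u₀
      rw [Units.val_mul, mul_assoc]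
      rw [show (↑Cu : Matrix (Fin 2) (Fin 2) K)
          * (s • (algebraMap O K).mapMatrix (↑u₀ : Matrix (Fin 2) (Fin 2) O))
          = (↑(G0⁻¹ * g₁) : Matrix (Fin 2) (Fin 2) K) from hc.symm]
      rw [Units.val_mul, Units.mul_inv_cancel_left]
  · -- intersection
    have hWW : (!![0, 1; 1, 0] : Matrix (Fin 2) (Fin 2) K) * !![0, 1; 1, 0] = 1 := by
      ext i j
      fin_cases i <;> fin_cases j <;>
        simp [Matrix.mul_apply, Fin.sum_univ_two, Matrix.one_apply]
    set Wu : (Matrix (Fin 2) (Fin 2) K)ˣ := ⟨!![0, 1; 1, 0], !![0, 1; 1, 0], hWW, hWW⟩ with hWu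
    have hWNW : ∀ N : Matrix (Fin 2) (Fin 2) K,
        (!![0, 1; 1, 0] : Matrix (Fin 2) (Fin 2) K) * N * !![0, 1; 1, 0]
          = !![N 1 1, N 1 0; N 0 1, N 0 0] := by
      intro N
      ext i j
      fin_cases i <;> fin_cases j <;>
        simp [Matrix.mul_apply, Fin.sum_univ_two, Matrix.vecMul, dotProduct,
          Matrix.vecHead, Matrix.vecTail]
    have hCuN : ∀ N : Matrix (Fin 2) (Fin 2) K,
        (↑Cu⁻¹ : Matrix (Fin 2) (Fin 2) K) * N * (↑Cu : Matrix (Fin 2) (Fin 2) K)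
          = !![N 1 1, N 1 0 * algebraMap O K a;
              N 0 1 * (algebraMap O K a)⁻¹, N 0 0] := by
      intro N
      rw [hCuinv, hCuval]
      ext i j
      fin_cases i <;> fin_cases j <;>
        (simp [Matrix.mul_apply, Fin.sum_univ_two, Matrix.vecMul, dotProduct,
          Matrix.vecHead, Matrix.vecTail]; try field_simp) <;> try ring
    refine ⟨G0 * Wu, ?_⟩
    ext m
    simp only [Set.mem_inter_iff, Set.mem_setOf_eq]
    have hXW : (↑(G0 * Wu)⁻¹ : Matrix (Fin 2) (Fin 2) K) * m * (↑(G0 * Wu) : Matrix (Fin 2) (Fin 2) K)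
        = !![((↑G0⁻¹ : Matrix (Fin 2) (Fin 2) K) * m * (↑G0 : Matrix (Fin 2) (Fin 2) K)) 1 1,
            ((↑G0⁻¹ : Matrix (Fin 2) (Fin 2) K) * m * (↑G0 : Matrix (Fin 2) (Fin 2) K)) 1 0;
            ((↑G0⁻¹ : Matrix (Fin 2) (Fin 2) K) * m * (↑G0 : Matrix (Fin 2) (Fin 2) K)) 0 1,
            ((↑G0⁻¹ : Matrix (Fin 2) (Fin 2) K) * m * (↑G0 : Matrix (Fin 2) (Fin 2) K)) 0 0] := by
      rw [hsplit G0 Wu m]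
      rw [show (↑Wu⁻¹ : Matrix (Fin 2) (Fin 2) K) = !![0, 1; 1, 0] from rfl,
        show (↑Wu : Matrix (Fin 2) (Fin 2) K) = !![0, 1; 1, 0] from rfl]
      exact hWNW _
    have hXC : (↑(G0 * Cu)⁻¹ : Matrix (Fin 2) (Fin 2) K) * m * (↑(G0 * Cu) : Matrix (Fin 2) (Fin 2) K)
        = !![((↑G0⁻¹ : Matrix (Fin 2) (Fin 2) K) * m * (↑G0 : Matrix (Fin 2) (Fin 2) K)) 1 1,
            ((↑G0⁻¹ : Matrix (Fin 2) (Fin 2) K) * m * (↑G0 : Matrix (Fin 2) (Fin 2) K)) 1 0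
              * algebraMap O K a;
            ((↑G0⁻¹ : Matrix (Fin 2) (Fin 2) K) * m * (↑G0 : Matrix (Fin 2) (Fin 2) K)) 0 1
              * (algebraMap O K a)⁻¹,
            ((↑G0⁻¹ : Matrix (Fin 2) (Fin 2) K) * m * (↑G0 : Matrix (Fin 2) (Fin 2) K)) 0 0] := by
      rw [hsplit G0 Cu m]
      exact hCuN _
    set N := (↑G0⁻¹ : Matrix (Fin 2) (Fin 2) K) * m * (↑G0 : Matrix (Fin 2) (Fin 2) K) with hN
    constructor
    · rintro ⟨hD, hD'⟩
      constructor
      · intro i j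
        rw [hXW]
        fin_cases i <;> fin_cases j
        · simpa using hD 1 1
        · simpa using hD 1 0
        · simpa using hD 0 1
        · simpa using hD 0 0
      · have h10 := hD' 1 0
        rw [hXC] at h10
        have h10' : N 0 1 * (algebraMap O K a)⁻¹ ∈ Set.range (algebraMap O K) := by
          simpa using h10
        obtain ⟨c, hcc⟩ := h10'
        refine ⟨c, ?_⟩
        rw [hXW]
        have hval : N 0 1 = algebraMap O K (a * c) := by
          rw [map_mul]
          have h2 : algebraMap O K c * algebraMap O K a = N 0 1 := by
            rw [hcc]
            field_simp
          rw [← h2]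
          ring
        simpa using hval
    · rintro ⟨hX, c, hc⟩
      have hX' : ∀ i j : Fin 2, (!![N 1 1, N 1 0; N 0 1, N 0 0] : Matrix (Fin 2) (Fin 2) K) i j
          ∈ Set.range (algebraMap O K) := by
        intro i j
        rw [← hXW]
        exact hX i j
      have hc' : N 0 1 = algebraMap O K (a * c) := by
        have := hc
        rw [hXW] at this
        simpa using this
      constructor
      · intro i j
        fin_cases i <;> fin_cases j
        · simpa using hX' 1 1
        · simpa using hX' 1 0
        · simpa using hX' 0 1
        · simpa using hX' 0 0
      · intro i j
        rw [hXC]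
        fin_cases i <;> fin_cases j
        · simpa using hX' 0 0
        · have hb' : N 1 0 ∈ Set.range (algebraMap O K) := by simpa using hX' 0 1
          obtain ⟨b, hb⟩ := hb'
          refine ⟨b * a, ?_⟩
          have : algebraMap O K (b * a) = N 1 0 * algebraMap O K a := by
            rw [map_mul, hb]
          simpa using this
        · refine ⟨c, ?_⟩
          have : algebraMap O K c = N 0 1 * (algebraMap O K a)⁻¹ := by
            rw [hc', map_mul]
            field_simp
            all_goals ring
          simpa using this
        · simpa using hX' 1 1
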